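/- Let x_1,…,x_m ∈ ℝ^d satisfy max_i ‖x_i‖ ≤ 1 and be separable with margin γ ∈ (0,1]. Let b > 0, and let ℓ be a convex, differentiable, monotonically decreasing loss admitting an inverse ℓ⁻¹ on (0, ℓ(0)], whose derivative ℓ' is μ-Lipschitz, and which satisfies ℓ(z) = z^(−b) for all z ≥ 1. Consider gradient descent iterates w_1 = 0, w_{t+1} = w_t − η_t∇L̂(w_t) with 0 < η_t ≤ 1/μ, and let w ≠ 0 be an iterate with L̂(w) = ε for some ε ∈ (0, ℓ(0)). Then for every p ∈ [ε, 1], at least (1−p)·m of the indices i ∈ {1,…,m} satisfy x_iᵀ(w/‖w‖) > (γ/2)·p^(1/b). -/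

import Mathlib

open scoped RealInnerProductSpace


lemma tangent_le_of_convexOn {f : ℝ → ℝ} {f' : ℝ → ℝ} (hconv : ConvexOn ℝ Set.univ f)
    (hd : ∀ z, HasDerivAt f (f' z) z) (a v : ℝ) :
    f v + f' v * (a - v) ≤ f a := by
  rcases lt_trichotomy v a with h | h | h
  · have := hconv.le_slope_of_hasDerivAt (Set.mem_univ v) (Set.mem_univ a) h (hd v)
    rw [slope_def_field, le_div_iff₀ (by linarith)] at this
    linarith
  · simp [h]
  · have := hconv.slope_le_of_hasDerivAt (Set.mem_univ a) (Set.mem_univ v) h (hd v)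
    rw [slope_def_field, div_le_iff₀ (by linarith)] at this
    linarith


variable {E : Type*} [NormedAddCommGroup E] [InnerProductSpace ℝ E] [CompleteSpace E]

lemma hasGradientAt_sumLoss {m : ℕ} (x : Fin m → E) (ℓ ℓ' : ℝ → ℝ)
    (hd : ∀ z, HasDerivAt ℓ (ℓ' z) z) (c : ℝ) (v : E) :
    HasGradientAt (fun u => c * ∑ i, ℓ ⟪x i, u⟫) (c • ∑ i, ℓ' ⟪x i, v⟫ • x i) v := by
  rw [hasGradientAt_iff_hasFDerivAt]
  have h1 : ∀ i : Fin m, HasFDerivAt (fun u : E => ℓ ⟪x i, u⟫)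
      (ℓ' ⟪x i, v⟫ • innerSL ℝ (x i)) v := by
    intro i
    exact (hd ⟪x i, v⟫).comp_hasFDerivAt v (innerSL ℝ (x i)).hasFDerivAt
  have h2 : HasFDerivAt (fun u : E => ∑ i, ℓ ⟪x i, u⟫)
      (∑ i, ℓ' ⟪x i, v⟫ • innerSL ℝ (x i)) v := HasFDerivAt.fun_sum (fun i _ => h1 i)
  have h3 := h2.const_mul c
  convert h3 using 1
  all_goals ext u
  all_goals simp [InnerProductSpace.toDual_apply_apply, inner_smul_left, sum_inner, real_inner_smul_left]


variable {E : Type*} [NormedAddCommGroup E] [InnerProductSpace ℝ E] [CompleteSpace E]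

lemma descent_lemma {f : E → ℝ} {G : E → E} {μ : ℝ} (hμ : 0 ≤ μ)
    (hG : ∀ z, HasGradientAt f (G z) z)
    (hLip : ∀ a b : E, ‖G a - G b‖ ≤ μ * ‖a - b‖) (xp v : E) :
    f (xp + v) ≤ f xp + ⟪G xp, v⟫ + μ / 2 * ‖v‖ ^ 2 := by
  have hGc : Continuous G := by
    rw [Metric.continuous_iff]
    intro a ε hε
    by_cases hμ0 : μ = 0
    · exact ⟨1, one_pos, fun b _ => by
        have := hLip b a
        rw [hμ0, zero_mul] at this
        have : dist (G b) (G a) ≤ 0 := by rwa [dist_eq_norm]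
        linarith [hε]⟩
    · have hμ' : 0 < μ := lt_of_le_of_ne hμ (Ne.symm hμ0)
      refine ⟨ε / μ, by positivity, fun b hb => ?_⟩
      have := hLip b a
      rw [dist_eq_norm]
      calc ‖G b - G a‖ ≤ μ * ‖b - a‖ := this
        _ < μ * (ε / μ) := by
            refine mul_lt_mul_of_pos_left ?_ hμ'
            rwa [dist_eq_norm] at hb
        _ = ε := by field_simp
  have hc : ∀ τ : ℝ, HasDerivAt (fun τ : ℝ => f (xp + τ • v)) ⟪G (xp + τ • v), v⟫ τ := by
    intro τ
    have h1 : HasDerivAt (fun τ : ℝ => xp + τ • v) v τ := by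
      simpa using ((hasDerivAt_id τ).smul_const v).const_add xp
    have h2 := ((hG (xp + τ • v)).hasFDerivAt).comp_hasDerivAt τ h1
    simp only [InnerProductSpace.toDual_apply_apply] at h2; exact h2
  set φ' : ℝ → ℝ := fun τ => ⟪G (xp + τ • v), v⟫ with hφ'
  have hφ'c : Continuous φ' := by
    apply Continuous.inner
    · exact hGc.comp (by continuity)
    · exact continuous_const
  have hFTC : f (xp + v) - f xp = ∫ τ in (0:ℝ)..1, φ' τ := by
    have := intervalIntegral.integral_eq_sub_of_hasDerivAt
      (f := fun τ : ℝ => f (xp + τ • v)) (f' := φ') (a := 0) (b := 1)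
      (fun τ _ => hc τ) (hφ'c.intervalIntegrable 0 1)
    rw [this]; norm_num
  have hmono : ∫ τ in (0:ℝ)..1, φ' τ ≤ ∫ τ in (0:ℝ)..1, (⟪G xp, v⟫ + μ * ‖v‖ ^ 2 * τ) := by
    refine intervalIntegral.integral_mono_on (by norm_num) (hφ'c.intervalIntegrable 0 1)
      ((Continuous.intervalIntegrable (by continuity) 0 1)) (fun τ hτ => ?_)
    obtain ⟨h0, h1⟩ := hτ
    have key : φ' τ - ⟪G xp, v⟫ ≤ μ * ‖v‖ ^ 2 * τ := by
      rw [hφ']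
      calc ⟪G (xp + τ • v), v⟫ - ⟪G xp, v⟫ = ⟪G (xp + τ • v) - G xp, v⟫ := by
            rw [inner_sub_left]
        _ ≤ ‖G (xp + τ • v) - G xp‖ * ‖v‖ := real_inner_le_norm _ _
        _ ≤ (μ * ‖xp + τ • v - xp‖) * ‖v‖ := by
            exact mul_le_mul_of_nonneg_right (hLip _ _) (norm_nonneg _)
        _ = μ * ‖v‖ ^ 2 * τ := by
            rw [add_sub_cancel_left, norm_smul, Real.norm_eq_abs, abs_of_nonneg h0]; ring
    linarith
  have hrhs : ∫ τ in (0:ℝ)..1, (⟪G xp, v⟫ + μ * ‖v‖ ^ 2 * τ)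
      = ⟪G xp, v⟫ + μ / 2 * ‖v‖ ^ 2 := by
    rw [intervalIntegral.integral_add (intervalIntegrable_const)
      ((Continuous.intervalIntegrable (by continuity) 0 1)),
      intervalIntegral.integral_const, intervalIntegral.integral_const_mul, integral_id]
    norm_num; ring
  linarith [hFTC, hmono, hrhs ▸ hmono]


variable {E : Type*} [NormedAddCommGroup E] [InnerProductSpace ℝ E] [CompleteSpace E]

lemma lip_sumLoss {m : ℕ} (hm : 0 < m) (x : Fin m → E) (hx : ∀ i, ‖x i‖ ≤ 1)
    (ℓ' : ℝ → ℝ) {μ : ℝ} (hμ : 0 < μ) (hlip : ∀ a b' : ℝ, |ℓ' a - ℓ' b'| ≤ μ * |a - b'|)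
    (u v : E) :
    ‖((m : ℝ)⁻¹ • ∑ i, ℓ' ⟪x i, u⟫ • x i) - ((m : ℝ)⁻¹ • ∑ i, ℓ' ⟪x i, v⟫ • x i)‖
      ≤ μ * ‖u - v‖ := by
  have hmr : (0 : ℝ) < m := by exact_mod_cast hm
  rw [← smul_sub, ← Finset.sum_sub_distrib]
  have key : ‖∑ i, (ℓ' ⟪x i, u⟫ • x i - ℓ' ⟪x i, v⟫ • x i)‖ ≤ ∑ i : Fin m, μ * ‖u - v‖ := by
    refine (norm_sum_le _ _).trans (Finset.sum_le_sum fun i _ => ?_)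
    rw [← sub_smul, norm_smul]
    have h1 : |ℓ' ⟪x i, u⟫ - ℓ' ⟪x i, v⟫| ≤ μ * |⟪x i, u⟫ - ⟪x i, v⟫| := hlip _ _
    have h2 : |⟪x i, u⟫ - ⟪x i, v⟫| ≤ ‖u - v‖ := by
      rw [← inner_sub_right]
      calc |⟪x i, u - v⟫| ≤ ‖x i‖ * ‖u - v‖ := abs_real_inner_le_norm _ _
        _ ≤ 1 * ‖u - v‖ := by
            exact mul_le_mul_of_nonneg_right (hx i) (norm_nonneg _)
        _ = ‖u - v‖ := one_mul _
    calc ‖ℓ' ⟪x i, u⟫ - ℓ' ⟪x i, v⟫‖ * ‖x i‖ ≤ (μ * ‖u - v‖) * 1 := by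
          refine mul_le_mul ?_ (hx i) (norm_nonneg _) (by positivity)
          exact (Real.norm_eq_abs _ ▸ h1).trans (by nlinarith [abs_nonneg (⟪x i, u⟫ - ⟪x i, v⟫)])
      _ = μ * ‖u - v‖ := mul_one _
  rw [norm_smul]
  simp only [Finset.sum_const, Finset.card_univ, Fintype.card_fin, nsmul_eq_mul] at key
  calc ‖(m : ℝ)⁻¹‖ * ‖∑ i, (ℓ' ⟪x i, u⟫ • x i - ℓ' ⟪x i, v⟫ • x i)‖
      ≤ (m : ℝ)⁻¹ * ((m : ℝ) * (μ * ‖u - v‖)) := by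
        rw [Real.norm_eq_abs, abs_of_pos (by positivity)]
        exact mul_le_mul_of_nonneg_left key (by positivity)
    _ = μ * ‖u - v‖ := by field_simp

set_option maxHeartbeats 1000000 in
/-- polynomially-tailed losses, Theorem 9 of the paper.
Under the separability, loss and smoothness assumptions, with `ℓ(z) = z^{−b}`
for `z ≥ 1`, if `w ≠ 0` is a gradient descent iterate with
`L̂(w) = ε ∈ (0, ℓ(0))`, then for every `p ∈ [ε, 1]`, at least `(1 − p)·m` of
the indices `i` satisfy `xᵢᵀ(w/‖w‖) > (γ/2)·p^{1/b}`. -/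
theorem stmt_17 {d m : ℕ} (hm : 0 < m)
    (x : Fin m → EuclideanSpace ℝ (Fin d)) (hx : ∀ i, ‖x i‖ ≤ 1)
    (γ : ℝ) (hγ : γ ∈ Set.Ioc (0 : ℝ) 1)
    (w₀ : EuclideanSpace ℝ (Fin d)) (hw₀ : ‖w₀‖ = 1)
    (hsep : ∀ i, γ ≤ ⟪x i, w₀⟫)
    (b : ℝ) (hb : 0 < b)
    (ℓ ℓ' : ℝ → ℝ) (hconv : ConvexOn ℝ Set.univ ℓ)
    (hderiv : ∀ z, HasDerivAt ℓ (ℓ' z) z)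
    (hanti : StrictAnti ℓ)
    (ℓinv : ℝ → ℝ) (hinv : ∀ z ∈ Set.Ioc (0 : ℝ) (ℓ 0), ℓ (ℓinv z) = z)
    (hpoly : ∀ z : ℝ, 1 ≤ z → ℓ z = z ^ (-b))
    (μ : ℝ) (hμ : 0 < μ) (hlip : ∀ a b' : ℝ, |ℓ' a - ℓ' b'| ≤ μ * |a - b'|)
    (L : EuclideanSpace ℝ (Fin d) → ℝ)
    (hL : ∀ v, L v = (1 / m) * ∑ i, ℓ ⟪x i, v⟫)
    (η : ℕ → ℝ) (hη : ∀ t, 0 < η t ∧ η t ≤ 1 / μ)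
    (w : ℕ → EuclideanSpace ℝ (Fin d)) (hw1 : w 1 = 0)
    (hrec : ∀ t, 1 ≤ t → w (t + 1) = w t - η t • gradient L (w t))
    (t₀ : ℕ) (ht₀ : 1 ≤ t₀) (hwne : w t₀ ≠ 0)
    (ε : ℝ) (hε : ε ∈ Set.Ioo (0 : ℝ) (ℓ 0)) (hLw : L (w t₀) = ε)
    (p : ℝ) (hp : p ∈ Set.Icc ε 1) :
    ∃ S : Finset (Fin m), (1 - p) * m ≤ S.card ∧
      ∀ i ∈ S, γ / 2 * p ^ (1 / b) < ⟪x i, ‖w t₀‖⁻¹ • w t₀⟫ := by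
  obtain ⟨hγ0, hγ1⟩ := hγ
  obtain ⟨hε0, hεℓ0⟩ := hε
  obtain ⟨hεp, hp1⟩ := hp
  have hε1 : ε ≤ 1 := hεp.trans hp1
  have hp0 : 0 < p := lt_of_lt_of_le hε0 hεp
  have hb' : b ≠ 0 := ne_of_gt hb
  have hmr : (0 : ℝ) < m := by exact_mod_cast hm
  -- the gradient field
  set G : EuclideanSpace ℝ (Fin d) → EuclideanSpace ℝ (Fin d) := fun v => (m : ℝ)⁻¹ • ∑ i, ℓ' ⟪x i, v⟫ • x i with hG
  have hLfun : L = fun u => (m : ℝ)⁻¹ * ∑ i, ℓ ⟪x i, u⟫ := funext fun u => by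
    rw [hL u, one_div]
  have hGrad : ∀ v, HasGradientAt L (G v) v := fun v => by
    rw [hLfun]; exact hasGradientAt_sumLoss x ℓ ℓ' hderiv (m : ℝ)⁻¹ v
  have hgrad_eq : ∀ v, gradient L v = G v := fun v => (hGrad v).gradient
  have hLipG : ∀ u v, ‖G u - G v‖ ≤ μ * ‖u - v‖ := fun u v =>
    lip_sumLoss hm x hx ℓ' hμ hlip u v
  have hDescent : ∀ u v, L (u + v) ≤ L u + ⟪G u, v⟫ + μ / 2 * ‖v‖ ^ 2 :=
    descent_lemma hμ.le hGrad hLipG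
  -- convexity: first-order condition
  have hConvL : ∀ u v, L v + ⟪G v, u - v⟫ ≤ L u := by
    intro u v
    have expand : ⟪G v, u - v⟫ = (m : ℝ)⁻¹ * ∑ i, ℓ' ⟪x i, v⟫ * (⟪x i, u⟫ - ⟪x i, v⟫) := by
      rw [hG]
      simp only [real_inner_smul_left, sum_inner, inner_sub_right, mul_sub, Finset.sum_sub_distrib]
    rw [hL u, hL v, one_div, expand, ← mul_add, ← Finset.sum_add_distrib]
    refine mul_le_mul_of_nonneg_left (Finset.sum_le_sum fun i _ => ?_) (by positivity)
    exact tangent_le_of_convexOn hconv hderiv _ _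
  -- key per-step inequalities
  have hstep : ∀ s, 1 ≤ s → L (w (s + 1)) ≤ L (w s) ∧
      ∀ u, ‖w (s + 1) - u‖ ^ 2 ≤ ‖w s - u‖ ^ 2 + 2 * η s * (L u - L (w (s + 1))) := by
    intro s hs
    obtain ⟨hη0, hη1⟩ := hη s
    have hημ : η s * μ ≤ 1 := by
      rw [le_div_iff₀ hμ] at hη1; linarith
    have hws : w (s + 1) = w s - η s • G (w s) := by rw [hrec s hs, hgrad_eq]
    set g := G (w s) with hg
    have hk : (0:ℝ) ≤ ‖g‖ ^ 2 := sq_nonneg _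
    have hDes : L (w (s + 1)) ≤ L (w s) - η s * ‖g‖ ^ 2 + μ / 2 * (η s ^ 2 * ‖g‖ ^ 2) := by
      have := hDescent (w s) (-(η s • g))
      rw [← sub_eq_add_neg, ← hws] at this
      have e1 : ⟪g, -(η s • g)⟫ = -(η s * ‖g‖ ^ 2) := by
        rw [inner_neg_right, real_inner_smul_right, real_inner_self_eq_norm_sq]
      have e2 : ‖-(η s • g)‖ ^ 2 = η s ^ 2 * ‖g‖ ^ 2 := by
        rw [norm_neg, norm_smul, mul_pow, Real.norm_eq_abs, sq_abs]
      rw [e1, e2] at this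
      linarith
    constructor
    · nlinarith [mul_nonneg (mul_nonneg hη0.le hη0.le) hk]
    · intro u
      have hsq : ‖w (s + 1) - u‖ ^ 2
          = ‖w s - u‖ ^ 2 - 2 * (η s * ⟪g, w s - u⟫) + η s ^ 2 * ‖g‖ ^ 2 := by
        have : w (s + 1) - u = (w s - u) - η s • g := by rw [hws]; abel
        rw [this, norm_sub_sq_real, real_inner_smul_right, norm_smul, mul_pow,
          Real.norm_eq_abs, sq_abs, real_inner_comm]
      have hconv1 : L (w s) - L u ≤ ⟪g, w s - u⟫ := by
        have := hConvL u (w s)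
        have e : ⟪g, u - w s⟫ = -⟪g, w s - u⟫ := by
          rw [← inner_neg_right, neg_sub]
        rw [e] at this; linarith
      have hsqg : η s ^ 2 * ‖g‖ ^ 2 ≤ 2 * η s * (L (w s) - L (w (s + 1))) := by
        nlinarith [mul_le_mul_of_nonneg_right hημ (mul_nonneg (mul_nonneg hη0.le hη0.le) hk),
          mul_le_mul_of_nonneg_left hDes hη0.le]
      nlinarith [mul_le_mul_of_nonneg_left hconv1 (by linarith : (0:ℝ) ≤ 2 * η s)]
  -- monotone descent
  have hmono : ∀ s k, 1 ≤ s → L (w (s + k)) ≤ L (w s) := by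
    intro s k hs
    induction k with
    | zero => simp
    | succ k ih =>
        have h1 : 1 ≤ s + k := by omega
        calc L (w (s + (k + 1))) = L (w ((s + k) + 1)) := by ring_nf
          _ ≤ L (w (s + k)) := (hstep (s + k) h1).1
          _ ≤ L (w s) := ih
  have hLge : ∀ s, 1 ≤ s → s ≤ t₀ → ε ≤ L (w s) := by
    intro s hs hst
    obtain ⟨k, rfl⟩ := Nat.exists_eq_add_of_le hst
    rw [← hLw]
    exact hmono s k hs
  -- the comparison point u = R • w₀
  set R : ℝ := ε ^ (-(1 / b)) / γ with hR
  have hεrp : (0:ℝ) < ε ^ (-(1 / b)) := Real.rpow_pos_of_pos hε0 _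
  have hR0 : 0 < R := div_pos hεrp hγ0
  have hεb1 : (1:ℝ) ≤ ε ^ (-(1 / b)) :=
    Real.one_le_rpow_of_pos_of_le_one_of_nonpos hε0 hε1 (neg_nonpos.mpr (by positivity))
  set u : EuclideanSpace ℝ (Fin d) := R • w₀ with hu
  have hεval : ℓ (ε ^ (-(1 / b))) = ε := by
    rw [hpoly _ hεb1, ← Real.rpow_mul hε0.le]
    rw [show -(1 / b) * -b = 1 by field_simp]
    exact Real.rpow_one ε
  have hLu : L u ≤ ε := by
    rw [hL u, one_div]
    have hterm : ∀ i, ℓ ⟪x i, u⟫ ≤ ε := by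
      intro i
      have h1 : ε ^ (-(1 / b)) ≤ ⟪x i, u⟫ := by
        rw [hu, real_inner_smul_right]
        calc ε ^ (-(1 / b)) = R * γ := by rw [hR]; field_simp
          _ ≤ R * ⟪x i, w₀⟫ := mul_le_mul_of_nonneg_left (hsep i) hR0.le
      rw [← hεval]
      exact hanti.antitone h1
    calc (m : ℝ)⁻¹ * ∑ i, ℓ ⟪x i, u⟫ ≤ (m : ℝ)⁻¹ * ∑ _i : Fin m, ε := by
          exact mul_le_mul_of_nonneg_left (Finset.sum_le_sum fun i _ => hterm i) (by positivity)
      _ = ε := by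
          simp [Finset.sum_const]
          field_simp
  -- distance bound
  have hdist : ∀ s, 1 ≤ s → s ≤ t₀ → ‖w s - u‖ ^ 2 ≤ ‖u‖ ^ 2 := by
    intro s hs
    induction s, hs using Nat.le_induction with
    | base => intro _; rw [hw1, zero_sub, norm_neg]
    | succ s hs ih =>
        intro hst
        have hst' : s ≤ t₀ := by omega
        have h1 := (hstep s hs).2 u
        have h2 : L u ≤ L (w (s + 1)) := hLu.trans (hLge (s + 1) (by omega) hst)
        have hη0 := (hη s).1
        nlinarith [ih hst', mul_le_mul_of_nonneg_left (sub_nonpos.mpr h2)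
          (by linarith : (0:ℝ) ≤ 2 * η s)]
  have hun : ‖u‖ = R := by
    rw [hu, norm_smul, Real.norm_eq_abs, abs_of_pos hR0, hw₀, mul_one]
  have hWle : ‖w t₀‖ ≤ 2 * R := by
    have h1 := hdist t₀ ht₀ le_rfl
    have h2 : ‖w t₀ - u‖ ≤ ‖u‖ := by
      have := Real.sqrt_le_sqrt h1
      rwa [Real.sqrt_sq (norm_nonneg _), Real.sqrt_sq (norm_nonneg _)] at this
    have h3 := norm_sub_norm_le (w t₀) u
    linarith [h2, h3, hun.le, hun.ge]
  -- counting
  set W : ℝ := ‖w t₀‖ with hWd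
  have hW0 : 0 < W := norm_pos_iff.mpr hwne
  set τ : ℝ := γ / 2 * p ^ (1 / b) with hτ
  set S : Finset (Fin m) := Finset.univ.filter (fun i => τ < ⟪x i, W⁻¹ • w t₀⟫) with hS
  refine ⟨S, ?_, fun i hi => by
    rw [hS] at hi
    exact (Finset.mem_filter.mp hi).2⟩
  set z : ℝ := ε ^ (-(1 / b)) * p ^ (1 / b) with hz
  have hprp : (0:ℝ) < p ^ (1 / b) := Real.rpow_pos_of_pos hp0 _
  have hz1 : (1:ℝ) ≤ z := by
    have h1 : ε ^ (1 / b) ≤ p ^ (1 / b) := Real.rpow_le_rpow hε0.le hεp (by positivity)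
    calc (1:ℝ) = ε ^ (-(1 / b)) * ε ^ (1 / b) := by
          rw [← Real.rpow_add hε0]; norm_num
      _ ≤ z := by
          rw [hz]; exact mul_le_mul_of_nonneg_left h1 hεrp.le
  have hℓz : ℓ z = ε / p := by
    rw [hpoly _ hz1, hz, Real.mul_rpow hεrp.le hprp.le, ← Real.rpow_mul hε0.le,
      ← Real.rpow_mul hp0.le]
    rw [show -(1 / b) * -b = 1 by field_simp, show 1 / b * -b = -1 by field_simp]
    rw [Real.rpow_one, Real.rpow_neg_one]
    rw [div_eq_mul_inv]
  have hℓnonneg : ∀ r : ℝ, 0 ≤ ℓ r := by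
    intro r
    have h1 : r < max r 0 + 1 := by
      have := le_max_left r 0; linarith
    have h2 : (1:ℝ) ≤ max r 0 + 1 := by
      have := le_max_right r 0; linarith
    have := hanti h1
    rw [hpoly _ h2] at this
    have := Real.rpow_nonneg (by linarith : (0:ℝ) ≤ max r 0 + 1) (-b)
    linarith
  have hsum : ∑ i, ℓ ⟪x i, w t₀⟫ = ε * m := by
    have h := hLw
    rw [hL, one_div, inv_mul_eq_div, div_eq_iff (ne_of_gt hmr)] at h
    exact h
  -- bound on complement
  have hcompl : ∀ i ∈ Sᶜ, ε / p ≤ ℓ ⟪x i, w t₀⟫ := by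
    intro i hi
    rw [Finset.mem_compl, hS, Finset.mem_filter] at hi
    push_neg at hi
    have hle : ⟪x i, W⁻¹ • w t₀⟫ ≤ τ := hi (Finset.mem_univ i)
    have hiw : ⟪x i, w t₀⟫ ≤ τ * W := by
      have e : ⟪x i, W⁻¹ • w t₀⟫ = W⁻¹ * ⟪x i, w t₀⟫ := real_inner_smul_right _ _ _
      rw [e] at hle
      calc ⟪x i, w t₀⟫ = W * (W⁻¹ * ⟪x i, w t₀⟫) := by field_simp
        _ ≤ W * τ := mul_le_mul_of_nonneg_left hle hW0.le
        _ = τ * W := mul_comm _ _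
    have hWz : τ * W ≤ z := by
      have hτ0 : 0 ≤ τ := by rw [hτ]; positivity
      calc τ * W ≤ τ * (2 * R) := mul_le_mul_of_nonneg_left hWle hτ0
        _ = z := by rw [hτ, hR, hz]; field_simp
    rw [← hℓz]
    exact hanti.antitone (hiw.trans hWz)
  have hcard : (Sᶜ.card : ℝ) * (ε / p) ≤ ε * m := by
    calc (Sᶜ.card : ℝ) * (ε / p) ≤ ∑ i ∈ Sᶜ, ℓ ⟪x i, w t₀⟫ := by
          rw [← nsmul_eq_mul]
          exact Finset.card_nsmul_le_sum _ _ _ hcompl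
      _ ≤ ∑ i, ℓ ⟪x i, w t₀⟫ :=
          Finset.sum_le_sum_of_subset_of_nonneg (Finset.subset_univ _)
            (fun i _ _ => hℓnonneg _)
      _ = ε * m := hsum
  have hcardle : (Sᶜ.card : ℝ) ≤ p * m := by
    have hεp0 : 0 < ε / p := by positivity
    rw [← le_div_iff₀ hεp0] at hcard
    calc (Sᶜ.card : ℝ) ≤ ε * m / (ε / p) := hcard
      _ = p * m := by field_simp
  have htotal : (S.card : ℝ) + (Sᶜ.card : ℝ) = m := by
    have := Finset.card_add_card_compl S
    have : S.card + Sᶜ.card = m := by simpa using this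
    exact_mod_cast this
  linarith
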